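/- arXiv:0909.4126 — 2 statements merged into one kernel-verified Lean document; each statement's English description precedes it below -/
import Mathlib

section
/- Let X₁, …, Xₙ be exchangeable real random variables with finite mean, and let a, b ∈ ℝⁿ with a ≺ b (a is majorized by b, i.e., a = Tb for some doubly stochastic matrix T). Then ∑ᵢ aᵢXᵢ ≤_cx ∑ᵢ bᵢXᵢ. -/
open MeasureTheory

/-- The convex order `X ≤_cx Y`. -/
def ConvexOrder {Ω : Type*} [MeasurableSpace Ω] (ℙ : Measure Ω) (X Y : Ω → ℝ) : Prop :=
  ∀ φ : ℝ → ℝ, ConvexOn ℝ Set.univ φ →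
    Integrable (fun ω => φ (X ω)) ℙ → Integrable (fun ω => φ (Y ω)) ℙ →
    ∫ ω, φ (X ω) ∂ℙ ≤ ∫ ω, φ (Y ω) ∂ℙ

/-- `T` is doubly stochastic. -/
def DoublyStochastic {n : ℕ} (T : Matrix (Fin n) (Fin n) ℝ) : Prop :=
  (∀ i j, 0 ≤ T i j) ∧ (∀ i, ∑ j, T i j = 1) ∧ (∀ j, ∑ i, T i j = 1)

/-- `a ≺ b`: `a` is majorized by `b`, i.e. `a = T b` for a doubly stochastic `T`. -/
def MajorizedBy {n : ℕ} (a b : Fin n → ℝ) : Prop :=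
  ∃ T : Matrix (Fin n) (Fin n) ℝ, DoublyStochastic T ∧ a = T.mulVec b

/-- `X₁, …, Xₙ` are exchangeable: the joint law is permutation invariant. -/
def Exchangeable {Ω : Type*} [MeasurableSpace Ω] (ℙ : Measure Ω) {n : ℕ}
    (X : Fin n → Ω → ℝ) : Prop :=
  ∀ σ : Equiv.Perm (Fin n),
    Measure.map (fun ω => fun i => X (σ i) ω) ℙ = Measure.map (fun ω => fun i => X i ω) ℙ

theorem stmt_7 {Ω : Type*} [MeasurableSpace Ω] (ℙ : Measure Ω) [IsProbabilityMeasure ℙ]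
    {n : ℕ} (X : Fin n → Ω → ℝ) (hXm : ∀ i, Measurable (X i))
    (hint : ∀ i, Integrable (X i) ℙ)
    (hexch : Exchangeable ℙ X)
    (a b : Fin n → ℝ) (hab : MajorizedBy a b) :
    ConvexOrder ℙ (fun ω => ∑ i, a i * X i ω) (fun ω => ∑ i, b i * X i ω) := by
  intro φ hφ hφa hφb
  classical
  obtain ⟨T, hT, rfl⟩ := hab
  have hTmem : T ∈ doublyStochastic ℝ (Fin n) := by
    rw [mem_doublyStochastic_iff_sum]
    exact ⟨hT.1, hT.2.1, hT.2.2⟩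
  obtain ⟨w, hw0, hw1, hwT⟩ := exists_eq_sum_perm_of_mem_doublyStochastic hTmem
  -- φ is continuous
  have hφc : Continuous φ := by
    have := hφ.continuousOn isOpen_univ
    rwa [continuousOn_univ] at this
  -- The permuted sums
  set S : Equiv.Perm (Fin n) → Ω → ℝ := fun σ ω => ∑ i, b (σ i) * X i ω with hS
  have hSm : ∀ σ, Measurable (S σ) := fun σ =>
    Finset.measurable_sum _ fun i _ => (hXm i).const_mul _
  -- a-decomposition: T.mulVec b i = ∑ σ, w σ * b (σ i)
  have ha : ∀ i, T.mulVec b i = ∑ σ : Equiv.Perm (Fin n), w σ * b (σ i) := by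
    intro i
    rw [← hwT]
    simp only [Matrix.mulVec, dotProduct, Matrix.sum_apply, Matrix.smul_apply,
      Equiv.Perm.permMatrix, PEquiv.toMatrix_apply, Equiv.toPEquiv_apply, smul_eq_mul,
      Finset.sum_mul]
    rw [Finset.sum_comm]
    refine Finset.sum_congr rfl fun σ _ => ?_
    simp [mul_ite, ite_mul]
  -- pointwise decomposition of the a-sum
  have hdec : ∀ ω, ∑ i, T.mulVec b i * X i ω = ∑ σ : Equiv.Perm (Fin n), w σ * S σ ω := by
    intro ω
    simp only [ha, Finset.sum_mul]
    rw [Finset.sum_comm]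
    refine Finset.sum_congr rfl fun σ _ => ?_
    simp [hS, Finset.mul_sum, mul_assoc]
  -- equality of integrals using exchangeability
  have hY : Measurable fun ω => fun i => X i ω := measurable_pi_lambda _ hXm
  have hYσ : ∀ σ : Equiv.Perm (Fin n), Measurable fun ω => fun i => X (σ i) ω :=
    fun σ => measurable_pi_lambda _ fun i => hXm (σ i)
  have hg : ∀ σ : Equiv.Perm (Fin n), Measurable fun v : Fin n → ℝ => φ (∑ i, b i * v (σ i)) := by
    intro σ
    exact hφc.measurable.comp (Finset.measurable_sum _ fun i _ => (measurable_pi_apply (σ i)).const_mul _)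
  -- key: ∫ φ(S σ) = ∫ φ(∑ b X) and integrability
  have hkey : ∀ σ : Equiv.Perm (Fin n),
      (∫ ω, φ (S σ ω) ∂ℙ = ∫ ω, φ (∑ i, b i * X i ω) ∂ℙ) ∧
      Integrable (fun ω => φ (S σ ω)) ℙ := by
    intro σ
    -- S σ ω = ∑ i, b i * X (σ⁻¹ i) ω, and law of (X (σ⁻¹ i))_i = law of (X i)_i
    have h1 : ∀ ω, S σ ω = (fun v : Fin n → ℝ => ∑ i, b i * v i) (fun i => X (σ⁻¹ i) ω) := by
      intro ω
      exact Fintype.sum_equiv σ _ _ fun i => by simp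
    have hmeasg : Measurable fun v : Fin n → ℝ => φ (∑ i, b i * v i) :=
      hφc.measurable.comp (Finset.measurable_sum _ fun i _ => (measurable_pi_apply i).const_mul _)
    have hmap := hexch σ⁻¹
    constructor
    · calc ∫ ω, φ (S σ ω) ∂ℙ
          = ∫ v, φ (∑ i, b i * v i) ∂(Measure.map (fun ω => fun i => X (σ⁻¹ i) ω) ℙ) := by
            rw [integral_map (hYσ σ⁻¹).aemeasurable hmeasg.aestronglyMeasurable]
            exact integral_congr_ae (Filter.Eventually.of_forall fun ω => congrArg φ (h1 ω))
        _ = ∫ v, φ (∑ i, b i * v i) ∂(Measure.map (fun ω => fun i => X i ω) ℙ) := by rw [hmap]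
        _ = ∫ ω, φ (∑ i, b i * X i ω) ∂ℙ := by
            rw [integral_map hY.aemeasurable hmeasg.aestronglyMeasurable]
    · have hib : Integrable (fun v : Fin n → ℝ => φ (∑ i, b i * v i))
          (Measure.map (fun ω => fun i => X i ω) ℙ) := by
        rw [integrable_map_measure hmeasg.aestronglyMeasurable hY.aemeasurable]
        exact hφb
      rw [← hmap, integrable_map_measure hmeasg.aestronglyMeasurable (hYσ σ⁻¹).aemeasurable] at hib
      exact hib.congr (Filter.Eventually.of_forall fun ω => congrArg φ (h1 ω).symm)
  -- Jensen pointwise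
  have hjensen : ∀ ω, φ (∑ i, T.mulVec b i * X i ω)
      ≤ ∑ σ : Equiv.Perm (Fin n), w σ * φ (S σ ω) := by
    intro ω
    rw [hdec ω]
    have := hφ.map_sum_le (t := Finset.univ) (w := w) (p := fun σ => S σ ω)
      (fun σ _ => hw0 σ) hw1 (fun σ _ => Set.mem_univ _)
    simpa [smul_eq_mul] using this
  -- integrate
  have hintsum : Integrable (fun ω => ∑ σ : Equiv.Perm (Fin n), w σ * φ (S σ ω)) ℙ :=
    integrable_finset_sum _ fun σ _ => ((hkey σ).2.const_mul _)
  calc ∫ ω, φ (∑ i, T.mulVec b i * X i ω) ∂ℙ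
      ≤ ∫ ω, ∑ σ : Equiv.Perm (Fin n), w σ * φ (S σ ω) ∂ℙ :=
        integral_mono hφa hintsum hjensen
    _ = ∑ σ : Equiv.Perm (Fin n), w σ * ∫ ω, φ (S σ ω) ∂ℙ := by
        rw [integral_finset_sum _ fun σ _ => ((hkey σ).2.const_mul _)]
        exact Finset.sum_congr rfl fun σ _ => integral_const_mul _ _
    _ = ∑ σ : Equiv.Perm (Fin n), w σ * ∫ ω, φ (∑ i, b i * X i ω) ∂ℙ :=
        Finset.sum_congr rfl fun σ _ => by rw [(hkey σ).1]
    _ = ∫ ω, φ (∑ i, b i * X i ω) ∂ℙ := by rw [← Finset.sum_mul, hw1, one_mul]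
end

section
/- If f and g are log-concave probability densities on ℝ, then their convolution f * g is log-concave. -/
open MeasureTheory

open Set ENNReal NNReal Filter

lemma sumset_meas_compact {K L : Set ℝ} (hK : IsCompact K) (hL : IsCompact L)
    (hKne : K.Nonempty) (hLne : L.Nonempty) {S : Set ℝ} (hS : MeasurableSet S)
    (hsub : ∀ a ∈ K, ∀ b ∈ L, a + b ∈ S) :
    volume K + volume L ≤ volume S := by
  obtain ⟨k, hkK, hkmax⟩ := hK.exists_isGreatest hKne
  obtain ⟨l, hlL, hlmin⟩ := hL.exists_isLeast hLne
  set X : Set ℝ := (fun x => x + (-l)) ⁻¹' K with hXdef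
  set Y : Set ℝ := (fun x => x + (-k)) ⁻¹' L with hYdef
  have hXm : MeasurableSet X := hK.measurableSet.preimage (measurable_add_const _)
  have hYm : MeasurableSet Y := hL.measurableSet.preimage (measurable_add_const _)
  have hXS : X ⊆ S := fun x hx => by
    have : (x + -l) + l ∈ S := hsub _ hx _ hlL
    simpa using this
  have hYS : Y ⊆ S := fun x hx => by
    have : k + (x + -k) ∈ S := hsub _ hkK _ hx
    have h2 : k + (x + -k) = x := by ring
    rwa [h2] at this
  have hInter : X ∩ Y ⊆ {k + l} := by
    rintro x ⟨hx1, hx2⟩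
    have h1 : x + -l ≤ k := hkmax hx1
    have h2 : l ≤ x + -k := hlmin hx2
    have : x = k + l := le_antisymm (by linarith) (by linarith)
    simp [this]
  have hvolX : volume X = volume K := measure_preimage_add_right volume (-l) K
  have hvolY : volume Y = volume L := measure_preimage_add_right volume (-k) L
  calc volume K + volume L = volume X + volume Y := by rw [hvolX, hvolY]
    _ = volume (X ∪ Y) + volume (X ∩ Y) := (measure_union_add_inter X hYm).symm
    _ ≤ volume S + 0 := by
        exact add_le_add (measure_mono (union_subset hXS hYS))
          (le_trans (measure_mono hInter) (by simp))
    _ = volume S := by simp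

lemma sumset_meas {A B S : Set ℝ} (hA : MeasurableSet A) (hB : MeasurableSet B)
    (hAne : A.Nonempty) (hBne : B.Nonempty) (hAfin : volume A ≠ ⊤) (hBfin : volume B ≠ ⊤)
    (hS : MeasurableSet S) (hsub : ∀ a ∈ A, ∀ b ∈ B, a + b ∈ S) :
    volume A + volume B ≤ volume S := by
  refine ENNReal.le_of_forall_pos_le_add fun ε hε hfin => ?_
  have hεpos : (0:ℝ≥0∞) < (ε : ℝ≥0∞) := by exact_mod_cast hε
  have hε2 : ((ε : ℝ≥0∞) / 2) ≠ 0 := ENNReal.div_ne_zero.mpr ⟨hεpos.ne', ENNReal.ofNat_ne_top⟩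
  obtain ⟨K, hKA, hKc, hKlt⟩ := hA.exists_isCompact_lt_add hAfin hε2
  obtain ⟨L, hLB, hLc, hLlt⟩ := hB.exists_isCompact_lt_add hBfin hε2
  obtain ⟨a0, ha0⟩ := hAne
  obtain ⟨b0, hb0⟩ := hBne
  have hK' : IsCompact (K ∪ {a0}) := hKc.union isCompact_singleton
  have hL' : IsCompact (L ∪ {b0}) := hLc.union isCompact_singleton
  have hKA' : K ∪ {a0} ⊆ A := union_subset hKA (by simpa using ha0)
  have hLB' : L ∪ {b0} ⊆ B := union_subset hLB (by simpa using hb0)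
  have key := sumset_meas_compact hK' hL' (by simp) (by simp) hS
    (fun a ha b hb => hsub a (hKA' ha) b (hLB' hb))
  have h1 : volume A ≤ volume (K ∪ {a0}) + ε / 2 :=
    le_trans hKlt.le (add_le_add (measure_mono subset_union_left) le_rfl)
  have h2 : volume B ≤ volume (L ∪ {b0}) + ε / 2 :=
    le_trans hLlt.le (add_le_add (measure_mono subset_union_left) le_rfl)
  calc volume A + volume B ≤ (volume (K ∪ {a0}) + volume (L ∪ {b0})) + (ε/2 + ε/2) := by
        calc volume A + volume B ≤ (volume (K ∪ {a0}) + ε/2) + (volume (L ∪ {b0}) + ε/2) :=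
              add_le_add h1 h2
          _ = _ := by ring
    _ ≤ volume S + ε := by
        rw [ENNReal.add_halves]
        exact add_le_add key le_rfl

lemma PL_core {t : ℝ} (ht0 : 0 < t) (ht1 : t < 1)
    (u v w : ℝ → ℝ) (hu : Measurable u) (hv : Measurable v) (hw : Measurable w)
    (hu0 : ∀ x, 0 ≤ u x) (hv0 : ∀ x, 0 ≤ v x) (hw0 : ∀ x, 0 ≤ w x)
    (hle : ∀ x y, u x ^ (1 - t) * v y ^ t ≤ w ((1 - t) * x + t * y))
    (hu1 : ∀ x, u x ≤ 1) (hv1 : ∀ x, v x ≤ 1)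
    (husup : ∀ r : ℝ, r < 1 → ∃ x, r < u x) (hvsup : ∀ r : ℝ, r < 1 → ∃ x, r < v x)
    (hufin : ∀ r : ℝ, 0 < r → volume {x | r < u x} ≠ ⊤)
    (hvfin : ∀ r : ℝ, 0 < r → volume {x | r < v x} ≠ ⊤) :
    ENNReal.ofReal (1 - t) * (∫⁻ x, ENNReal.ofReal (u x)) +
      ENNReal.ofReal t * (∫⁻ x, ENNReal.ofReal (v x)) ≤ ∫⁻ x, ENNReal.ofReal (w x) := by
  have ht1' : 0 < 1 - t := by linarith
  -- layer cake representations
  have hlcu := lintegral_eq_lintegral_meas_lt volume (ae_of_all _ hu0) hu.aemeasurable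
  have hlcv := lintegral_eq_lintegral_meas_lt volume (ae_of_all _ hv0) hv.aemeasurable
  have hlcw := lintegral_eq_lintegral_meas_lt volume (ae_of_all _ hw0) hw.aemeasurable
  -- restrict u, v layer cakes to Ioo 0 1
  have hsplit : ∀ (f : ℝ → ℝ), (∀ x, f x ≤ 1) →
      (∫⁻ r in Ioi (0:ℝ), volume {x | r < f x}) = ∫⁻ r in Ioo (0:ℝ) 1, volume {x | r < f x} := by
    intro f hf1
    have hun : Ioo (0:ℝ) 1 ∪ Ici 1 = Ioi 0 := by
      ext x; simp only [mem_union, mem_Ioo, mem_Ici, mem_Ioi]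
      constructor
      · rintro (⟨h1, _⟩ | h); exacts [h1, by linarith]
      · intro h; by_cases h1 : x < 1; exacts [Or.inl ⟨h, h1⟩, Or.inr (by linarith)]
    have hdisj : Disjoint (Ioo (0:ℝ) 1) (Ici 1) := by
      rw [Set.disjoint_left]
      rintro x ⟨_, h2⟩ h3
      exact absurd h3 (not_le.mpr h2)
    rw [← hun, lintegral_union measurableSet_Ici hdisj]
    have hz : ∀ r ∈ Ici (1:ℝ), volume {x | r < f x} = (fun _ : ℝ => (0:ℝ≥0∞)) r := by
      intro r hr
      have he : {x | r < f x} = ∅ := by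
        ext x; simp only [mem_setOf_eq, mem_empty_iff_false, iff_false, not_lt]
        exact le_trans (hf1 x) hr
      simp [he]
    rw [setLIntegral_congr_fun measurableSet_Ici hz, lintegral_zero, add_zero]
  -- the key pointwise (in r) inequality
  have key : ∀ r ∈ Ioo (0:ℝ) 1,
      ENNReal.ofReal (1 - t) * volume {x | r < u x} + ENNReal.ofReal t * volume {x | r < v x}
        ≤ volume {x | r < w x} := by
    rintro r ⟨hr0, hr1⟩
    set A := {x | r < u x} with hAdef
    set B := {x | r < v x} with hBdef
    have hAm : MeasurableSet A := measurableSet_lt measurable_const hu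
    have hBm : MeasurableSet B := measurableSet_lt measurable_const hv
    set A' : Set ℝ := (fun x => (1 - t)⁻¹ * x) ⁻¹' A with hA'def
    set B' : Set ℝ := (fun x => t⁻¹ * x) ⁻¹' B with hB'def
    have hA'm : MeasurableSet A' := hAm.preimage (measurable_const_mul _)
    have hB'm : MeasurableSet B' := hBm.preimage (measurable_const_mul _)
    have hvolA' : volume A' = ENNReal.ofReal (1 - t) * volume A := by
      rw [hA'def, Real.volume_preimage_mul_left (inv_ne_zero ht1'.ne'), inv_inv,
        abs_of_pos ht1']
    have hvolB' : volume B' = ENNReal.ofReal t * volume B := by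
      rw [hB'def, Real.volume_preimage_mul_left (inv_ne_zero ht0.ne'), inv_inv,
        abs_of_pos ht0]
    have hA'ne : A'.Nonempty := by
      obtain ⟨x, hx⟩ := husup r hr1
      exact ⟨(1 - t) * x, by simp only [hA'def, mem_preimage]; rw [inv_mul_cancel_left₀ ht1'.ne']; exact hx⟩
    have hB'ne : B'.Nonempty := by
      obtain ⟨x, hx⟩ := hvsup r hr1
      exact ⟨t * x, by simp only [hB'def, mem_preimage]; rw [inv_mul_cancel_left₀ ht0.ne']; exact hx⟩
    have hA'fin : volume A' ≠ ⊤ := by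
      rw [hvolA']; exact ENNReal.mul_ne_top ENNReal.ofReal_ne_top (hufin r hr0)
    have hB'fin : volume B' ≠ ⊤ := by
      rw [hvolB']; exact ENNReal.mul_ne_top ENNReal.ofReal_ne_top (hvfin r hr0)
    have hsub : ∀ a ∈ A', ∀ b ∈ B', a + b ∈ {x | r < w x} := by
      intro a ha b hb
      have hau : r < u ((1 - t)⁻¹ * a) := ha
      have hbv : r < v (t⁻¹ * b) := hb
      have harg : (1 - t) * ((1 - t)⁻¹ * a) + t * (t⁻¹ * b) = a + b := by
        field_simp
      have h1 : r ^ (1 - t) < u ((1 - t)⁻¹ * a) ^ (1 - t) :=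
        Real.rpow_lt_rpow hr0.le hau ht1'
      have h2 : r ^ t < v (t⁻¹ * b) ^ t := Real.rpow_lt_rpow hr0.le hbv ht0
      have h3 : r ^ (1 - t) * r ^ t = r := by
        rw [← Real.rpow_add hr0]; norm_num
      have h4 : r < u ((1 - t)⁻¹ * a) ^ (1 - t) * v (t⁻¹ * b) ^ t := by
        calc r = r ^ (1 - t) * r ^ t := h3.symm
          _ < _ := mul_lt_mul'' h1 h2 (Real.rpow_pos_of_pos hr0 _).le
              (Real.rpow_pos_of_pos hr0 _).le
      have := hle ((1 - t)⁻¹ * a) (t⁻¹ * b)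
      rw [harg] at this
      exact lt_of_lt_of_le h4 this
    have := sumset_meas hA'm hB'm hA'ne hB'ne hA'fin hB'fin
      (measurableSet_lt measurable_const hw) hsub
    rwa [hvolA', hvolB'] at this
  -- assemble
  have hmu : Measurable fun r : ℝ => volume {x | r < u x} := by
    apply Antitone.measurable
    intro r s hrs
    exact measure_mono (fun x hx => lt_of_le_of_lt hrs hx)
  have hmv : Measurable fun r : ℝ => volume {x | r < v x} := by
    apply Antitone.measurable
    intro r s hrs
    exact measure_mono (fun x hx => lt_of_le_of_lt hrs hx)
  have hmw : Measurable fun r : ℝ => volume {x | r < w x} := by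
    apply Antitone.measurable
    intro r s hrs
    exact measure_mono (fun x hx => lt_of_le_of_lt hrs hx)
  calc ENNReal.ofReal (1 - t) * (∫⁻ x, ENNReal.ofReal (u x)) +
        ENNReal.ofReal t * (∫⁻ x, ENNReal.ofReal (v x))
      = ∫⁻ r in Ioo (0:ℝ) 1, (ENNReal.ofReal (1 - t) * volume {x | r < u x}
          + ENNReal.ofReal t * volume {x | r < v x}) := by
        rw [hlcu, hlcv, hsplit u hu1, hsplit v hv1,
          lintegral_add_left (hmu.const_mul _), lintegral_const_mul _ hmu,
          lintegral_const_mul _ hmv]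
    _ ≤ ∫⁻ r in Ioo (0:ℝ) 1, volume {x | r < w x} := setLIntegral_mono hmw key
    _ ≤ ∫⁻ r in Ioi (0:ℝ), volume {x | r < w x} := lintegral_mono_set (fun r hr => hr.1)
    _ = ∫⁻ x, ENNReal.ofReal (w x) := hlcw.symm

lemma ennreal_geom_mean {t : ℝ} (ht0 : 0 < t) (ht1 : t < 1) (x y : ℝ≥0∞) :
    x ^ (1 - t) * y ^ t ≤ ENNReal.ofReal (1 - t) * x + ENNReal.ofReal t * y := by
  have ht1' : (0:ℝ) < 1 - t := by linarith
  rcases eq_or_ne x ⊤ with rfl | hx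
  · have : ENNReal.ofReal (1 - t) * ⊤ = ⊤ :=
      ENNReal.mul_top (by simp [ENNReal.ofReal_eq_zero]; linarith)
    rw [this, top_add]; exact le_top
  rcases eq_or_ne y ⊤ with rfl | hy
  · have : ENNReal.ofReal t * ⊤ = ⊤ :=
      ENNReal.mul_top (by simp [ENNReal.ofReal_eq_zero]; linarith)
    rw [this, add_top]; exact le_top
  lift x to ℝ≥0 using hx
  lift y to ℝ≥0 using hy
  have hw : (1 - t).toNNReal + t.toNNReal = 1 := by
    rw [← Real.toNNReal_add ht1'.le ht0.le]
    norm_num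
  have h := NNReal.geom_mean_le_arith_mean2_weighted (1 - t).toNNReal t.toNNReal x y hw
  have hc1 : ((1 - t).toNNReal : ℝ) = 1 - t := Real.coe_toNNReal _ ht1'.le
  have hc2 : ((t).toNNReal : ℝ) = t := Real.coe_toNNReal _ ht0.le
  rw [hc1, hc2] at h
  calc (x:ℝ≥0∞) ^ (1 - t) * (y:ℝ≥0∞) ^ t
      = ((x ^ (1 - t) * y ^ t : ℝ≥0) : ℝ≥0∞) := by
        rw [ENNReal.coe_mul, ENNReal.coe_rpow_of_nonneg _ ht1'.le,
          ENNReal.coe_rpow_of_nonneg _ ht0.le]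
    _ ≤ (((1 - t).toNNReal * x + t.toNNReal * y : ℝ≥0) : ℝ≥0∞) := by exact_mod_cast h
    _ = ENNReal.ofReal (1 - t) * x + ENNReal.ofReal t * y := by
        rw [ENNReal.coe_add, ENNReal.coe_mul, ENNReal.coe_mul, ENNReal.ofReal, ENNReal.ofReal]

lemma PL_trunc {t : ℝ} (ht0 : 0 < t) (ht1 : t < 1)
    (u v w : ℝ → ℝ) (hu : Measurable u) (hv : Measurable v) (hw : Measurable w)
    (hu0 : ∀ x, 0 ≤ u x) (hv0 : ∀ x, 0 ≤ v x) (hw0 : ∀ x, 0 ≤ w x)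
    (hle : ∀ x y, u x ^ (1 - t) * v y ^ t ≤ w ((1 - t) * x + t * y))
    {c R : ℝ} (hubd : ∀ x, u x ≤ c) (hvbd : ∀ x, v x ≤ c)
    (husupp : ∀ x, x ∉ Icc (-R) R → u x = 0) (hvsupp : ∀ x, x ∉ Icc (-R) R → v x = 0) :
    (∫⁻ x, ENNReal.ofReal (u x)) ^ (1 - t) * (∫⁻ x, ENNReal.ofReal (v x)) ^ t
      ≤ ∫⁻ x, ENNReal.ofReal (w x) := by
  have ht1' : (0:ℝ) < 1 - t := by linarith
  -- suprema
  have hrne : (Set.range u).Nonempty := ⟨u 0, mem_range_self 0⟩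
  have hrbdd : BddAbove (Set.range u) := ⟨c, by rintro _ ⟨x, rfl⟩; exact hubd x⟩
  have hrne' : (Set.range v).Nonempty := ⟨v 0, mem_range_self 0⟩
  have hrbdd' : BddAbove (Set.range v) := ⟨c, by rintro _ ⟨x, rfl⟩; exact hvbd x⟩
  set M := sSup (Set.range u) with hMdef
  set N := sSup (Set.range v) with hNdef
  have hMle : ∀ x, u x ≤ M := fun x => le_csSup hrbdd (mem_range_self x)
  have hNle : ∀ x, v x ≤ N := fun x => le_csSup hrbdd' (mem_range_self x)
  have hM0 : 0 ≤ M := le_trans (hu0 0) (hMle 0)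
  have hN0 : 0 ≤ N := le_trans (hv0 0) (hNle 0)
  rcases eq_or_lt_of_le hM0 with hM | hM
  · -- u identically zero
    have : ∀ x, u x = 0 := fun x => le_antisymm (le_trans (hMle x) hM.ge) (hu0 x)
    have hIu : (∫⁻ x, ENNReal.ofReal (u x)) = 0 := by simp [this]
    rw [hIu, ENNReal.zero_rpow_of_pos ht1', zero_mul]
    exact zero_le
  rcases eq_or_lt_of_le hN0 with hN | hN
  · have : ∀ x, v x = 0 := fun x => le_antisymm (le_trans (hNle x) hN.ge) (hv0 x)
    have hIv : (∫⁻ x, ENNReal.ofReal (v x)) = 0 := by simp [this]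
    rw [hIv, ENNReal.zero_rpow_of_pos ht0, mul_zero]
    exact zero_le
  -- normalized functions
  set u' : ℝ → ℝ := fun x => M⁻¹ * u x with hu'def
  set v' : ℝ → ℝ := fun x => N⁻¹ * v x with hv'def
  set W : ℝ := M ^ (1 - t) * N ^ t with hWdef
  have hWpos : 0 < W := mul_pos (Real.rpow_pos_of_pos hM _) (Real.rpow_pos_of_pos hN _)
  set w' : ℝ → ℝ := fun x => W⁻¹ * w x with hw'def
  have hcore := PL_core ht0 ht1 u' v' w'
    (hu.const_mul _) (hv.const_mul _) (hw.const_mul _)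
    (fun x => mul_nonneg (inv_nonneg.mpr hM0) (hu0 x))
    (fun x => mul_nonneg (inv_nonneg.mpr hN0) (hv0 x))
    (fun x => mul_nonneg (inv_nonneg.mpr hWpos.le) (hw0 x))
    (fun x y => by
      have h1 : u' x ^ (1 - t) * v' y ^ t
          = W⁻¹ * (u x ^ (1 - t) * v y ^ t) := by
        rw [hu'def, hv'def]
        simp only
        have hW : W⁻¹ = (M ^ (1 - t))⁻¹ * (N ^ t)⁻¹ := by rw [hWdef, mul_inv]
        rw [Real.mul_rpow (inv_nonneg.mpr hM0) (hu0 x),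
          Real.mul_rpow (inv_nonneg.mpr hN0) (hv0 y),
          Real.inv_rpow hM0, Real.inv_rpow hN0, hW]
        ring
      rw [h1]
      exact mul_le_mul_of_nonneg_left (hle x y) (inv_nonneg.mpr hWpos.le))
    (fun x => by
      rw [hu'def]
      calc M⁻¹ * u x ≤ M⁻¹ * M := mul_le_mul_of_nonneg_left (hMle x) (inv_nonneg.mpr hM0)
        _ = 1 := inv_mul_cancel₀ hM.ne')
    (fun x => by
      rw [hv'def]
      calc N⁻¹ * v x ≤ N⁻¹ * N := mul_le_mul_of_nonneg_left (hNle x) (inv_nonneg.mpr hN0)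
        _ = 1 := inv_mul_cancel₀ hN.ne')
    (fun r hr => by
      have h1 : r * M < M := by nlinarith
      obtain ⟨_, ⟨x, rfl⟩, hx⟩ := exists_lt_of_lt_csSup hrne
        (show r * M < sSup (Set.range u) from h1)
      refine ⟨x, ?_⟩
      show r < M⁻¹ * u x
      have h3 := mul_lt_mul_of_pos_left hx (inv_pos.mpr hM)
      have h2 : M⁻¹ * (r * M) = r := by field_simp
      rwa [h2] at h3)
    (fun r hr => by
      have h1 : r * N < N := by nlinarith
      obtain ⟨_, ⟨x, rfl⟩, hx⟩ := exists_lt_of_lt_csSup hrne'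
        (show r * N < sSup (Set.range v) from h1)
      refine ⟨x, ?_⟩
      show r < N⁻¹ * v x
      have h3 := mul_lt_mul_of_pos_left hx (inv_pos.mpr hN)
      have h2 : N⁻¹ * (r * N) = r := by field_simp
      rwa [h2] at h3)
    (fun r hr => by
      have hsub : {x | r < u' x} ⊆ Icc (-R) R := by
        intro x hx
        by_contra hmem
        have h0 : u' x = 0 := by show M⁻¹ * u x = 0; rw [husupp x hmem, mul_zero]
        rw [mem_setOf_eq, h0] at hx
        exact absurd hx (not_lt.mpr hr.le)
      exact ne_top_of_le_ne_top (by simp [Real.volume_Icc]) (measure_mono hsub))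
    (fun r hr => by
      have hsub : {x | r < v' x} ⊆ Icc (-R) R := by
        intro x hx
        by_contra hmem
        have h0 : v' x = 0 := by show N⁻¹ * v x = 0; rw [hvsupp x hmem, mul_zero]
        rw [mem_setOf_eq, h0] at hx
        exact absurd hx (not_lt.mpr hr.le)
      exact ne_top_of_le_ne_top (by simp [Real.volume_Icc]) (measure_mono hsub))
  -- rewrite normalized integrals
  have hIu' : (∫⁻ x, ENNReal.ofReal (u' x)) = ENNReal.ofReal M⁻¹ * ∫⁻ x, ENNReal.ofReal (u x) := by
    simp only [hu'def, ENNReal.ofReal_mul (inv_nonneg.mpr hM0)]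
    exact lintegral_const_mul _ hu.ennreal_ofReal
  have hIv' : (∫⁻ x, ENNReal.ofReal (v' x)) = ENNReal.ofReal N⁻¹ * ∫⁻ x, ENNReal.ofReal (v x) := by
    simp only [hv'def, ENNReal.ofReal_mul (inv_nonneg.mpr hN0)]
    exact lintegral_const_mul _ hv.ennreal_ofReal
  have hIw' : (∫⁻ x, ENNReal.ofReal (w' x)) = ENNReal.ofReal W⁻¹ * ∫⁻ x, ENNReal.ofReal (w x) := by
    simp only [hw'def, ENNReal.ofReal_mul (inv_nonneg.mpr hWpos.le)]
    exact lintegral_const_mul _ hw.ennreal_ofReal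
  have hgm := le_trans (ennreal_geom_mean ht0 ht1 (∫⁻ x, ENNReal.ofReal (u' x))
    (∫⁻ x, ENNReal.ofReal (v' x))) hcore
  rw [hIu', hIv', hIw'] at hgm
  rw [ENNReal.mul_rpow_of_nonneg _ _ ht1'.le, ENNReal.mul_rpow_of_nonneg _ _ ht0.le] at hgm
  have hcoeff : ENNReal.ofReal M⁻¹ ^ (1 - t) * ENNReal.ofReal N⁻¹ ^ t = ENNReal.ofReal W⁻¹ := by
    rw [ENNReal.ofReal_rpow_of_pos (inv_pos.mpr hM), ENNReal.ofReal_rpow_of_pos (inv_pos.mpr hN),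
      ← ENNReal.ofReal_mul (Real.rpow_nonneg (inv_nonneg.mpr hM0) _)]
    congr 1
    rw [hWdef, mul_inv, ← Real.inv_rpow hM0, ← Real.inv_rpow hN0]
  have harr : ENNReal.ofReal M⁻¹ ^ (1 - t) * (∫⁻ x, ENNReal.ofReal (u x)) ^ (1 - t) *
      (ENNReal.ofReal N⁻¹ ^ t * (∫⁻ x, ENNReal.ofReal (v x)) ^ t)
      = ENNReal.ofReal W⁻¹ *
        ((∫⁻ x, ENNReal.ofReal (u x)) ^ (1 - t) * (∫⁻ x, ENNReal.ofReal (v x)) ^ t) := by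
    rw [← hcoeff]; ring
  rw [harr] at hgm
  have hWne : ENNReal.ofReal W⁻¹ ≠ 0 := by
    simp [ENNReal.ofReal_eq_zero, not_le, inv_pos, hWpos]
  exact (ENNReal.mul_le_mul_iff_right hWne ENNReal.ofReal_ne_top).mp hgm

/-- truncation of a function to height `n` and support `[-n, n]`. -/
noncomputable def plTrunc (f : ℝ → ℝ) (n : ℕ) : ℝ → ℝ :=
  (Icc (-(n:ℝ)) n).indicator fun x => min (f x) n

lemma plTrunc_measurable {f : ℝ → ℝ} (hf : Measurable f) (n : ℕ) :
    Measurable (plTrunc f n) :=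
  (hf.min measurable_const).indicator measurableSet_Icc

lemma plTrunc_nonneg {f : ℝ → ℝ} (hf0 : ∀ x, 0 ≤ f x) (n : ℕ) (x : ℝ) :
    0 ≤ plTrunc f n x := by
  unfold plTrunc
  rw [indicator_apply]
  split
  · exact le_min (hf0 x) (Nat.cast_nonneg n)
  · exact le_rfl

lemma plTrunc_le {f : ℝ → ℝ} (hf0 : ∀ x, 0 ≤ f x) (n : ℕ) (x : ℝ) :
    plTrunc f n x ≤ f x := by
  unfold plTrunc
  rw [indicator_apply]
  split
  · exact min_le_left _ _
  · exact hf0 x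

lemma plTrunc_bd (f : ℝ → ℝ) (hf0 : ∀ x, 0 ≤ f x) (n : ℕ) (x : ℝ) (c : ℝ)
    (hc : (n:ℝ) ≤ c) : plTrunc f n x ≤ c := by
  unfold plTrunc
  rw [indicator_apply]
  split
  · exact le_trans (min_le_right _ _) hc
  · exact le_trans (Nat.cast_nonneg n) hc

lemma plTrunc_supp (f : ℝ → ℝ) (n : ℕ) (R : ℝ) (hR : (n:ℝ) ≤ R) (x : ℝ)
    (hx : x ∉ Icc (-R) R) : plTrunc f n x = 0 := by
  unfold plTrunc
  apply indicator_of_notMem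
  intro hmem
  apply hx
  obtain ⟨h1, h2⟩ := hmem
  exact ⟨by linarith, by linarith⟩

lemma plTrunc_ptmono {f : ℝ → ℝ} (hf0 : ∀ x, 0 ≤ f x) (x : ℝ) :
    Monotone fun n : ℕ => ENNReal.ofReal (plTrunc f n x) := by
  intro n m hnm
  apply ENNReal.ofReal_le_ofReal
  unfold plTrunc
  rw [indicator_apply, indicator_apply]
  split
  · rename_i h1
    have h2 : x ∈ Icc (-(m:ℝ)) m := by
      obtain ⟨ha, hb⟩ := h1
      have : (n:ℝ) ≤ m := Nat.cast_le.mpr hnm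
      exact ⟨by linarith, by linarith⟩
    rw [if_pos h2]
    exact min_le_min le_rfl (Nat.cast_le.mpr hnm)
  · split
    · exact le_min (hf0 x) (Nat.cast_nonneg m)
    · exact le_rfl

lemma plTrunc_intmono {f : ℝ → ℝ} (hf0 : ∀ x, 0 ≤ f x) :
    Monotone fun n : ℕ => ∫⁻ x, ENNReal.ofReal (plTrunc f n x) := by
  intro n m hnm
  apply lintegral_mono
  intro x
  exact plTrunc_ptmono hf0 x hnm

lemma plTrunc_sup {f : ℝ → ℝ} (hf : Measurable f) (hf0 : ∀ x, 0 ≤ f x) :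
    (⨆ n : ℕ, ∫⁻ x, ENNReal.ofReal (plTrunc f n x)) = ∫⁻ x, ENNReal.ofReal (f x) := by
  rw [← lintegral_iSup (fun n => (plTrunc_measurable hf n).ennreal_ofReal)
    (fun n m hnm x => plTrunc_ptmono hf0 x hnm)]
  congr 1
  funext x
  apply le_antisymm
  · exact iSup_le fun n => ENNReal.ofReal_le_ofReal (plTrunc_le hf0 n x)
  · obtain ⟨n, hn1, hn2⟩ : ∃ n : ℕ, |x| ≤ n ∧ f x ≤ n := by
      obtain ⟨n, hn⟩ := exists_nat_ge (max |x| (f x))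
      exact ⟨n, le_trans (le_max_left _ _) hn, le_trans (le_max_right _ _) hn⟩
    have heq : plTrunc f n x = f x := by
      unfold plTrunc
      rw [indicator_apply, if_pos, min_eq_left hn2]
      rw [abs_le] at hn1
      exact ⟨hn1.1, hn1.2⟩
    exact le_trans (le_of_eq (congrArg ENNReal.ofReal heq.symm))
      (le_iSup (fun n => ENNReal.ofReal (plTrunc f n x)) n)

lemma PL1 {t : ℝ} (ht0 : 0 < t) (ht1 : t < 1)
    (u v w : ℝ → ℝ) (hu : Measurable u) (hv : Measurable v) (hw : Measurable w)
    (hu0 : ∀ x, 0 ≤ u x) (hv0 : ∀ x, 0 ≤ v x) (hw0 : ∀ x, 0 ≤ w x)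
    (hle : ∀ x y, u x ^ (1 - t) * v y ^ t ≤ w ((1 - t) * x + t * y)) :
    (∫⁻ x, ENNReal.ofReal (u x)) ^ (1 - t) * (∫⁻ x, ENNReal.ofReal (v x)) ^ t
      ≤ ∫⁻ x, ENNReal.ofReal (w x) := by
  have ht1' : (0:ℝ) < 1 - t := by linarith
  have hAt : Tendsto (fun n : ℕ => ∫⁻ x, ENNReal.ofReal (plTrunc u n x)) atTop
      (nhds (∫⁻ x, ENNReal.ofReal (u x))) :=
    plTrunc_sup hu hu0 ▸ tendsto_atTop_iSup (plTrunc_intmono hu0)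
  have hBt : Tendsto (fun n : ℕ => ∫⁻ x, ENNReal.ofReal (plTrunc v n x)) atTop
      (nhds (∫⁻ x, ENNReal.ofReal (v x))) :=
    plTrunc_sup hv hv0 ▸ tendsto_atTop_iSup (plTrunc_intmono hv0)
  have hkey : ∀ n m : ℕ, (∫⁻ x, ENNReal.ofReal (plTrunc u n x)) ^ (1 - t) *
      (∫⁻ x, ENNReal.ofReal (plTrunc v m x)) ^ t ≤ ∫⁻ x, ENNReal.ofReal (w x) := by
    intro n m
    apply PL_trunc ht0 ht1 (plTrunc u n) (plTrunc v m) w (plTrunc_measurable hu n)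
      (plTrunc_measurable hv m) hw (plTrunc_nonneg hu0 n) (plTrunc_nonneg hv0 m) hw0
      (c := max n m) (R := max n m)
    · intro x y
      calc plTrunc u n x ^ (1 - t) * plTrunc v m y ^ t ≤ u x ^ (1 - t) * v y ^ t := by
            apply mul_le_mul
            · exact Real.rpow_le_rpow (plTrunc_nonneg hu0 n x) (plTrunc_le hu0 n x) ht1'.le
            · exact Real.rpow_le_rpow (plTrunc_nonneg hv0 m y) (plTrunc_le hv0 m y) ht0.le
            · exact Real.rpow_nonneg (plTrunc_nonneg hv0 m y) _
            · exact Real.rpow_nonneg (hu0 x) _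
        _ ≤ w ((1 - t) * x + t * y) := hle x y
    · exact fun x => plTrunc_bd u hu0 n x _ (le_max_left _ _)
    · exact fun x => plTrunc_bd v hv0 m x _ (le_max_right _ _)
    · exact fun x hx => plTrunc_supp u n _ (le_max_left _ _) x hx
    · exact fun x hx => plTrunc_supp v m _ (le_max_right _ _) x hx
  set Iu := ∫⁻ x, ENNReal.ofReal (u x) with hIu
  set Iv := ∫⁻ x, ENNReal.ofReal (v x) with hIv
  set Iw := ∫⁻ x, ENNReal.ofReal (w x) with hIw
  set A : ℕ → ℝ≥0∞ := fun n => ∫⁻ x, ENNReal.ofReal (plTrunc u n x) with hA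
  set B : ℕ → ℝ≥0∞ := fun n => ∫⁻ x, ENNReal.ofReal (plTrunc v n x) with hB
  rcases eq_or_ne Iu 0 with h0 | hIu0
  · rw [h0, ENNReal.zero_rpow_of_pos ht1', zero_mul]; exact zero_le
  rcases eq_or_ne Iv 0 with h0 | hIv0
  · rw [h0, ENNReal.zero_rpow_of_pos ht0, mul_zero]; exact zero_le
  have hAn0 : ∃ n, A n ≠ 0 := by
    by_contra h
    push_neg at h
    apply hIu0
    rw [hIu, ← plTrunc_sup hu hu0]
    exact ENNReal.iSup_eq_zero.mpr h
  have hBn0 : ∃ n, B n ≠ 0 := by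
    by_contra h
    push_neg at h
    apply hIv0
    rw [hIv, ← plTrunc_sup hv hv0]
    exact ENNReal.iSup_eq_zero.mpr h
  rcases eq_or_ne Iu ⊤ with htop | hIutop
  · obtain ⟨m0, hm0⟩ := hBn0
    have hlim : Tendsto (fun n => A n ^ (1 - t) * B m0 ^ t) atTop (nhds ⊤) := by
      have h1 : Tendsto (fun n => A n ^ (1 - t)) atTop (nhds (Iu ^ (1 - t))) :=
        (ENNReal.continuous_rpow_const.tendsto Iu).comp hAt
      rw [htop, ENNReal.top_rpow_of_pos ht1'] at h1
      have h2 := ENNReal.Tendsto.mul_const h1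
        (Or.inl (by simp : (⊤:ℝ≥0∞) ≠ 0)) (b := B m0 ^ t)
      have hBm0t : B m0 ^ t ≠ 0 := by
        intro h
        rcases ENNReal.rpow_eq_zero_iff.mp h with ⟨h1', _⟩ | ⟨_, h2'⟩
        · exact hm0 h1'
        · linarith
      rwa [ENNReal.top_mul hBm0t] at h2
    have hIwtop : (⊤:ℝ≥0∞) ≤ Iw :=
      le_of_tendsto hlim (Filter.Eventually.of_forall fun n => hkey n m0)
    exact le_trans le_top hIwtop
  rcases eq_or_ne Iv ⊤ with htop | hIvtop
  · obtain ⟨n0, hn0⟩ := hAn0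
    have hlim : Tendsto (fun m => A n0 ^ (1 - t) * B m ^ t) atTop (nhds ⊤) := by
      have h1 : Tendsto (fun m => B m ^ t) atTop (nhds (Iv ^ t)) :=
        (ENNReal.continuous_rpow_const.tendsto Iv).comp hBt
      rw [htop, ENNReal.top_rpow_of_pos ht0] at h1
      have h2 := ENNReal.Tendsto.const_mul h1
        (Or.inl (by simp : (⊤:ℝ≥0∞) ≠ 0)) (a := A n0 ^ (1 - t))
      have hAn0t : A n0 ^ (1 - t) ≠ 0 := by
        intro h
        rcases ENNReal.rpow_eq_zero_iff.mp h with ⟨h1', _⟩ | ⟨_, h2'⟩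
        · exact hn0 h1'
        · linarith
      rwa [ENNReal.mul_top hAn0t] at h2
    have hIwtop : (⊤:ℝ≥0∞) ≤ Iw :=
      le_of_tendsto hlim (Filter.Eventually.of_forall fun m => hkey n0 m)
    exact le_trans le_top hIwtop
  have h1 : Tendsto (fun n => A n ^ (1 - t)) atTop (nhds (Iu ^ (1 - t))) :=
    (ENNReal.continuous_rpow_const.tendsto Iu).comp hAt
  have h2 : Tendsto (fun n => B n ^ t) atTop (nhds (Iv ^ t)) :=
    (ENNReal.continuous_rpow_const.tendsto Iv).comp hBt
  have hprod : Tendsto (fun n => A n ^ (1 - t) * B n ^ t) atTop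
      (nhds (Iu ^ (1 - t) * Iv ^ t)) := by
    apply ENNReal.Tendsto.mul h1 _ h2 _
    · exact Or.inr (ENNReal.rpow_ne_top_of_nonneg ht0.le hIvtop)
    · exact Or.inr (ENNReal.rpow_ne_top_of_nonneg ht1'.le hIutop)
  exact le_of_tendsto hprod (Filter.Eventually.of_forall fun n => hkey n n)

/-- Log-concave probability density on `ℝ`. -/
def IsLogConcaveDensity (g : ℝ → ℝ) : Prop :=
  (∀ x, 0 ≤ g x) ∧ (∫ x, g x = 1) ∧ Convex ℝ {x | 0 < g x} ∧
    ConcaveOn ℝ {x | 0 < g x} (fun x => Real.log (g x))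

lemma conv_PL (f g : ℝ → ℝ) (hfm : Measurable f) (hgm : Measurable g)
    (hf : IsLogConcaveDensity f) (hg : IsLogConcaveDensity g)
    {t a b : ℝ} (ht0 : 0 < t) (ht1 : t < 1) :
    (∫⁻ y, ENNReal.ofReal (f (a - y) * g y)) ^ (1 - t) *
      (∫⁻ y, ENNReal.ofReal (f (b - y) * g y)) ^ t
      ≤ ∫⁻ y, ENNReal.ofReal (f ((1 - t) * a + t * b - y) * g y) := by
  obtain ⟨hf0, -, hfS, hfC⟩ := hf
  obtain ⟨hg0, -, hgS, hgC⟩ := hg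
  have ht1' : (0:ℝ) < 1 - t := by linarith
  set c : ℝ := (1 - t) * a + t * b with hc
  apply PL1 ht0 ht1 (fun y => f (a - y) * g y) (fun y => f (b - y) * g y)
    (fun y => f (c - y) * g y)
    ((hfm.comp (measurable_const.sub measurable_id)).mul hgm)
    ((hfm.comp (measurable_const.sub measurable_id)).mul hgm)
    ((hfm.comp (measurable_const.sub measurable_id)).mul hgm)
    (fun y => mul_nonneg (hf0 _) (hg0 _))
    (fun y => mul_nonneg (hf0 _) (hg0 _))
    (fun y => mul_nonneg (hf0 _) (hg0 _))
  intro x y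
  set z : ℝ := (1 - t) * x + t * y with hz
  rcases (mul_nonneg (hf0 (a - x)) (hg0 x)).lt_or_eq with hux | hux
  swap
  · rw [← hux, Real.zero_rpow ht1'.ne', zero_mul]
    exact mul_nonneg (hf0 _) (hg0 _)
  rcases (mul_nonneg (hf0 (b - y)) (hg0 y)).lt_or_eq with hvy | hvy
  swap
  · rw [← hvy, Real.zero_rpow ht0.ne', mul_zero]
    exact mul_nonneg (hf0 _) (hg0 _)
  have hfa : 0 < f (a - x) := by
    rcases (hf0 (a - x)).lt_or_eq with h' | h'
    · exact h'
    · rw [← h', zero_mul] at hux; exact absurd hux (lt_irrefl 0)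
  have hgx : 0 < g x := by
    rcases (hg0 x).lt_or_eq with h' | h'
    · exact h'
    · rw [← h', mul_zero] at hux; exact absurd hux (lt_irrefl 0)
  have hfb : 0 < f (b - y) := by
    rcases (hf0 (b - y)).lt_or_eq with h' | h'
    · exact h'
    · rw [← h', zero_mul] at hvy; exact absurd hvy (lt_irrefl 0)
  have hgy : 0 < g y := by
    rcases (hg0 y).lt_or_eq with h' | h'
    · exact h'
    · rw [← h', mul_zero] at hvy; exact absurd hvy (lt_irrefl 0)
  -- combination identities
  have hcf : (1 - t) • (a - x) + t • (b - y) = c - z := by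
    simp only [smul_eq_mul, hc, hz]; ring
  have hcg : (1 - t) • x + t • y = z := by simp only [smul_eq_mul, hz]
  -- membership in convex positivity sets
  have hmemf : c - z ∈ {x | 0 < f x} := by
    rw [← hcf]
    exact hfS hfa hfb ht1'.le ht0.le (by ring)
  have hmemg : z ∈ {x | 0 < g x} := by
    rw [← hcg]
    exact hgS hgx hgy ht1'.le ht0.le (by ring)
  -- log-concavity inequalities
  have hconcf : (1 - t) * Real.log (f (a - x)) + t * Real.log (f (b - y))
      ≤ Real.log (f (c - z)) := by
    have := hfC.2 hfa hfb ht1'.le ht0.le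
      (by ring : (1 - t) + t = 1)
    rw [hcf] at this
    simpa using this
  have hconcg : (1 - t) * Real.log (g x) + t * Real.log (g y) ≤ Real.log (g z) := by
    have := hgC.2 hgx hgy ht1'.le ht0.le
      (by ring : (1 - t) + t = 1)
    rw [hcg] at this
    simpa using this
  have h5 : f (a - x) ^ (1 - t) * f (b - y) ^ t ≤ f (c - z) := by
    calc f (a - x) ^ (1 - t) * f (b - y) ^ t
        = Real.exp ((1 - t) * Real.log (f (a - x)) + t * Real.log (f (b - y))) := by
          rw [Real.exp_add, Real.rpow_def_of_pos hfa, Real.rpow_def_of_pos hfb,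
            mul_comm (Real.log (f (a - x))), mul_comm (Real.log (f (b - y)))]
      _ ≤ Real.exp (Real.log (f (c - z))) := Real.exp_le_exp.mpr hconcf
      _ = f (c - z) := Real.exp_log hmemf
  have h6 : g x ^ (1 - t) * g y ^ t ≤ g z := by
    calc g x ^ (1 - t) * g y ^ t
        = Real.exp ((1 - t) * Real.log (g x) + t * Real.log (g y)) := by
          rw [Real.exp_add, Real.rpow_def_of_pos hgx, Real.rpow_def_of_pos hgy,
            mul_comm (Real.log (g x)), mul_comm (Real.log (g y))]
      _ ≤ Real.exp (Real.log (g z)) := Real.exp_le_exp.mpr hconcg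
      _ = g z := Real.exp_log hmemg
  calc (f (a - x) * g x) ^ (1 - t) * (f (b - y) * g y) ^ t
      = (f (a - x) ^ (1 - t) * f (b - y) ^ t) * (g x ^ (1 - t) * g y ^ t) := by
        rw [Real.mul_rpow (hf0 _) (hg0 _), Real.mul_rpow (hf0 _) (hg0 _)]; ring
    _ ≤ f (c - z) * g z := by
        apply mul_le_mul h5 h6
        · exact mul_nonneg (Real.rpow_nonneg (hg0 _) _) (Real.rpow_nonneg (hg0 _) _)
        · exact hf0 _

theorem stmt_10 (f g : ℝ → ℝ) (hfm : Measurable f) (hgm : Measurable g)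
    (hf : IsLogConcaveDensity f) (hg : IsLogConcaveDensity g) :
    IsLogConcaveDensity (fun x => ∫ y, f (x - y) * g y) := by
  obtain ⟨hf0, hf1, hfS, hfC⟩ := hf
  obtain ⟨hg0, hg1, hgS, hgC⟩ := hg
  -- integrability of f and g
  have hfi : Integrable f := by
    by_contra hcon
    rw [integral_undef hcon] at hf1
    norm_num at hf1
  have hgi : Integrable g := by
    by_contra hcon
    rw [integral_undef hcon] at hg1
    norm_num at hg1
  have hlf : (∫⁻ x, ENNReal.ofReal (f x)) = 1 := by
    rw [← ofReal_integral_eq_lintegral_ofReal hfi (ae_of_all _ hf0), hf1, ENNReal.ofReal_one]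
  have hlg : (∫⁻ x, ENNReal.ofReal (g x)) = 1 := by
    rw [← ofReal_integral_eq_lintegral_ofReal hgi (ae_of_all _ hg0), hg1, ENNReal.ofReal_one]
  set H : ℝ → ℝ≥0∞ := fun c => ∫⁻ y, ENNReal.ofReal (f (c - y) * g y) with hHdef
  have hKm : Measurable fun p : ℝ × ℝ => ENNReal.ofReal (f (p.1 - p.2) * g p.2) :=
    ((hfm.comp (measurable_fst.sub measurable_snd)).mul (hgm.comp measurable_snd)).ennreal_ofReal
  have hHm : Measurable H := Measurable.lintegral_prod_right hKm
  have hwm : ∀ c : ℝ, Measurable fun y => f (c - y) * g y := fun c =>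
    (hfm.comp (measurable_const.sub measurable_id)).mul hgm
  have heq : ∀ c : ℝ, (∫ y, f (c - y) * g y) = (H c).toReal := fun c => by
    rw [hHdef]
    exact integral_eq_lintegral_of_nonneg_ae (ae_of_all _ fun y => mul_nonneg (hf0 _) (hg0 _))
      (hwm c).aestronglyMeasurable
  -- total mass of H is one
  have htot : (∫⁻ c, H c) = 1 := by
    have hsw : (∫⁻ c, ∫⁻ y, ENNReal.ofReal (f (c - y) * g y))
        = ∫⁻ y, ∫⁻ c, ENNReal.ofReal (f (c - y) * g y) :=
      lintegral_lintegral_swap hKm.aemeasurable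
    rw [hHdef]
    simp only
    rw [hsw]
    have hinner : ∀ y : ℝ, (∫⁻ c, ENNReal.ofReal (f (c - y) * g y))
        = ENNReal.ofReal (g y) := by
      intro y
      have hsplit : ∀ c : ℝ, ENNReal.ofReal (f (c - y) * g y)
          = ENNReal.ofReal (f (c - y)) * ENNReal.ofReal (g y) := fun c =>
        ENNReal.ofReal_mul (hf0 _)
      simp only [hsplit]
      have hm1 : Measurable fun c : ℝ => ENNReal.ofReal (f (c - y)) :=
        (hfm.comp (measurable_id.sub measurable_const)).ennreal_ofReal
      rw [lintegral_mul_const _ hm1]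
      have htrans : (∫⁻ c, ENNReal.ofReal (f (c - y))) = ∫⁻ c, ENNReal.ofReal (f c) := by
        simp_rw [sub_eq_add_neg]
        exact lintegral_add_right_eq_self (fun c => ENNReal.ofReal (f c)) (-y)
      rw [htrans, hlf, one_mul]
    simp only [hinner]
    exact hlg
  -- H is a.e. finite
  have haefin : ∀ᵐ c, H c < ⊤ := ae_lt_top hHm (by rw [htot]; exact one_ne_top)
  -- the PL inequality for H
  have hPL : ∀ (a b t : ℝ), 0 < t → t < 1 →
      H a ^ (1 - t) * H b ^ t ≤ H ((1 - t) * a + t * b) := fun a b t ht0 ht1 =>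
    conv_PL f g hfm hgm ⟨hf0, hf1, hfS, hfC⟩ ⟨hg0, hg1, hgS, hgC⟩ ht0 ht1
  -- positivity/finiteness propagation
  have hprop : ∀ (a b t : ℝ), 0 < t → t < 1 → (0 < H a) → (H a ≠ ⊤) → (0 < H b) → (H b ≠ ⊤) →
      (0 < H ((1 - t) * a + t * b)) ∧ H ((1 - t) * a + t * b) ≠ ⊤ := by
    intro a b t ht0 ht1 hHa0 hHat hHb0 hHbt
    have ht1' : (0:ℝ) < 1 - t := by linarith
    set c : ℝ := (1 - t) * a + t * b with hc
    constructor
    · calc (0:ℝ≥0∞) < H a ^ (1 - t) * H b ^ t := by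
            apply ENNReal.mul_pos
            · intro h
              rcases ENNReal.rpow_eq_zero_iff.mp h with ⟨h1, _⟩ | ⟨_, h2⟩
              · exact hHa0.ne' h1
              · linarith
            · intro h
              rcases ENNReal.rpow_eq_zero_iff.mp h with ⟨h1, _⟩ | ⟨_, h2⟩
              · exact hHb0.ne' h1
              · linarith
        _ ≤ H c := hPL a b t ht0 ht1
    · -- finiteness via the a.e. finiteness of H
      intro htop
      have hca : c ≠ a := by
        intro hca
        rw [hca] at htop
        exact hHat htop
      -- every point of the open segment between c and a has H = ⊤
      have hseg : ∀ s : ℝ, 0 < s → s < 1 → H ((1 - s) * c + s * a) = ⊤ := by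
        intro s hs0 hs1
        have h1 := hPL c a s hs0 hs1
        rw [htop, ENNReal.top_rpow_of_pos (by linarith : (0:ℝ) < 1 - s)] at h1
        have hHas : H a ^ s ≠ 0 := by
          intro h
          rcases ENNReal.rpow_eq_zero_iff.mp h with ⟨h1', _⟩ | ⟨_, h2'⟩
          · exact hHa0.ne' h1'
          · linarith
        rw [ENNReal.top_mul hHas] at h1
        exact top_le_iff.mp h1
      have hsub : Ioo (min c a) (max c a) ⊆ {z | H z = ⊤} := by
        intro z hzmem
        obtain ⟨hz1, hz2⟩ := hzmem
        have hzseg : ∃ s : ℝ, 0 < s ∧ s < 1 ∧ (1 - s) * c + s * a = z := by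
          refine ⟨(z - c) / (a - c), ?_, ?_, ?_⟩
          · rcases lt_or_gt_of_ne hca with h | h
            · -- c < a : min = c, max = a
              rw [min_eq_left h.le] at hz1
              rw [max_eq_right h.le] at hz2
              apply div_pos (by linarith) (by linarith)
            · rw [min_eq_right h.le] at hz1
              rw [max_eq_left h.le] at hz2
              apply div_pos_of_neg_of_neg (by linarith) (by linarith)
          · rcases lt_or_gt_of_ne hca with h | h
            · rw [min_eq_left h.le] at hz1
              rw [max_eq_right h.le] at hz2
              rw [div_lt_one (by linarith)]
              linarith
            · rw [min_eq_right h.le] at hz1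
              rw [max_eq_left h.le] at hz2
              rw [div_lt_one_of_neg (by linarith)]
              linarith
          · have hd : a - c ≠ 0 := sub_ne_zero.mpr (Ne.symm hca)
            have key : ∀ C A Z : ℝ, A - C ≠ 0 →
                (1 - (Z - C)/(A - C)) * C + (Z - C)/(A - C) * A = Z := by
              intro C A Z hD
              field_simp
              ring
            exact key c a z hd
        obtain ⟨s, hs0, hs1, hsz⟩ := hzseg
        show H z = ⊤
        rw [← hsz]
        exact hseg s hs0 hs1
      have hpos : (0:ℝ≥0∞) < volume (Ioo (min c a) (max c a)) := by
        rw [Real.volume_Ioo]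
        apply ENNReal.ofReal_pos.mpr
        rcases lt_or_gt_of_ne hca with h | h
        · rw [min_eq_left h.le, max_eq_right h.le]; linarith
        · rw [min_eq_right h.le, max_eq_left h.le]; linarith
      have hzero : volume {z : ℝ | H z = ⊤} = 0 := by
        have : {z : ℝ | H z = ⊤} = {z : ℝ | ¬ H z < ⊤} := by
          ext z; simp [lt_top_iff_ne_top]
        rw [this]
        exact ae_iff.mp haefin
      have := measure_mono (μ := volume) hsub
      rw [hzero] at this
      exact absurd (lt_of_lt_of_le hpos this) (lt_irrefl 0)
  -- relating h and H
  have hpos_iff : ∀ a : ℝ, (0 < (H a).toReal) ↔ (0 < H a ∧ H a < ⊤) :=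
    fun a => ENNReal.toReal_pos_iff
  refine ⟨?_, ?_, ?_, ?_⟩
  · intro x
    exact integral_nonneg fun y => mul_nonneg (hf0 _) (hg0 _)
  · -- total integral is one
    rw [integral_congr_ae (ae_of_all _ heq)]
    rw [integral_toReal hHm.aemeasurable haefin, htot]
    rfl
  · -- convexity of the positivity set
    intro a ha b hb p q hp hq hpq
    simp only [mem_setOf_eq] at ha hb ⊢
    rw [heq] at ha hb
    rcases eq_or_lt_of_le hp with hp0 | hp0
    · have hq1 : q = 1 := by linarith
      rw [← hp0, hq1]
      simpa [heq] using hb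
    rcases eq_or_lt_of_le hq with hq0 | hq0
    · have hp1 : p = 1 := by linarith
      rw [← hq0, hp1]
      simpa [heq] using ha
    have hq1 : q < 1 := by linarith
    have hpt : p = 1 - q := by linarith
    obtain ⟨ha1, ha2⟩ := (hpos_iff a).mp ha
    obtain ⟨hb1, hb2⟩ := (hpos_iff b).mp hb
    obtain ⟨hc1, hc2⟩ := hprop a b q hq0 hq1 ha1 ha2.ne hb1 hb2.ne
    rw [heq]
    have : p • a + q • b = (1 - q) * a + q * b := by
      simp only [smul_eq_mul, hpt]
    rw [this]
    exact (hpos_iff _).mpr ⟨hc1, lt_top_iff_ne_top.mpr hc2⟩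
  · -- concavity of the logarithm
    constructor
    · -- the set is convex (same as above)
      intro a ha b hb p q hp hq hpq
      simp only [mem_setOf_eq] at ha hb ⊢
      rw [heq] at ha hb
      rcases eq_or_lt_of_le hp with hp0 | hp0
      · have hq1 : q = 1 := by linarith
        rw [← hp0, hq1]
        simpa [heq] using hb
      rcases eq_or_lt_of_le hq with hq0 | hq0
      · have hp1 : p = 1 := by linarith
        rw [← hq0, hp1]
        simpa [heq] using ha
      have hq1 : q < 1 := by linarith
      have hpt : p = 1 - q := by linarith
      obtain ⟨ha1, ha2⟩ := (hpos_iff a).mp ha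
      obtain ⟨hb1, hb2⟩ := (hpos_iff b).mp hb
      obtain ⟨hc1, hc2⟩ := hprop a b q hq0 hq1 ha1 ha2.ne hb1 hb2.ne
      rw [heq]
      have : p • a + q • b = (1 - q) * a + q * b := by
        simp only [smul_eq_mul, hpt]
      rw [this]
      exact (hpos_iff _).mpr ⟨hc1, lt_top_iff_ne_top.mpr hc2⟩
    · intro a ha b hb p q hp hq hpq
      simp only [mem_setOf_eq] at ha hb
      rcases eq_or_lt_of_le hp with hp0 | hp0
      · have hq1 : q = 1 := by linarith
        rw [← hp0, hq1]
        simp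
      rcases eq_or_lt_of_le hq with hq0 | hq0
      · have hp1 : p = 1 := by linarith
        rw [← hq0, hp1]
        simp
      have hq1 : q < 1 := by linarith
      have hpt : p = 1 - q := by linarith
      rw [heq] at ha hb
      obtain ⟨ha1, ha2⟩ := (hpos_iff a).mp ha
      obtain ⟨hb1, hb2⟩ := (hpos_iff b).mp hb
      obtain ⟨hc1, hc2⟩ := hprop a b q hq0 hq1 ha1 ha2.ne hb1 hb2.ne
      have hPLab := hPL a b q hq0 hq1
      -- pass to real numbers
      have hreal : ((H a).toReal) ^ (1 - q) * ((H b).toReal) ^ q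
          ≤ (H ((1 - q) * a + q * b)).toReal := by
        rw [ENNReal.toReal_rpow, ENNReal.toReal_rpow, ← ENNReal.toReal_mul]
        exact ENNReal.toReal_mono hc2 hPLab
      have hca : p • a + q • b = (1 - q) * a + q * b := by
        simp only [smul_eq_mul, hpt]
      have hla : (0:ℝ) < (H a).toReal ^ (1 - q) := Real.rpow_pos_of_pos ha _
      have hlb : (0:ℝ) < (H b).toReal ^ q := Real.rpow_pos_of_pos hb _
      have hlog := Real.log_le_log (mul_pos hla hlb) hreal
      rw [Real.log_mul hla.ne' hlb.ne', Real.log_rpow ha, Real.log_rpow hb] at hlog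
      -- convert goal
      simp only [smul_eq_mul]
      rw [heq a, heq b, heq (p * a + q * b)]
      have harg : p * a + q * b = (1 - q) * a + q * b := by rw [hpt]
      rw [harg, hpt]
      linarith [hlog]
end
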